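/- Let G be a finite simple graph and let G̃ be its extension. Then G̃ is distance-hereditary if and only if G is a cograph. -/

import Mathlib

open scoped BigOperators

/-- A graph is distance-hereditary if every connected induced subgraph preserves distances. -/
def DistHereditary {V : Type*} (G : SimpleGraph V) : Prop :=
  ∀ (U : Set V), (G.induce U).Connected → ∀ u v : U, (G.induce U).dist u v = G.dist u.1 v.1

/-- A cograph is a graph with no induced path on four vertices. -/
def IsCograph {V : Type*} (G : SimpleGraph V) : Prop :=
  ¬ ∃ a b c d : V, [a, b, c, d].Nodup ∧
      G.Adj a b ∧ G.Adj b c ∧ G.Adj c d ∧ ¬G.Adj a c ∧ ¬G.Adj a d ∧ ¬G.Adj b d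

/-- The extension of `G`: add a new vertex `none` adjacent to every vertex of `G`. -/
def extGraph {V : Type*} (G : SimpleGraph V) : SimpleGraph (Option V) where
  Adj a b :=
    match a, b with
    | some u, some w => G.Adj u w
    | some _, none => True
    | none, some _ => True
    | none, none => False
  symm := by
    constructor
    rintro (_ | a) (_ | b) h
    · exact h
    · exact h
    · exact h
    · exact h.symm
  loopless := by
    constructor
    rintro (_ | a) h
    · exact h
    · exact G.irrefl h

open SimpleGraph

@[simp] lemma extGraph_adj_some {V : Type*} (G : SimpleGraph V) (x y : V) :
    (extGraph G).Adj (some x) (some y) ↔ G.Adj x y := Iff.rfl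

@[simp] lemma extGraph_adj_some_none {V : Type*} (G : SimpleGraph V) (x : V) :
    (extGraph G).Adj (some x) none := trivial

@[simp] lemma extGraph_adj_none_some {V : Type*} (G : SimpleGraph V) (x : V) :
    (extGraph G).Adj none (some x) := trivial

lemma dist_eq_two {W : Type*} (G : SimpleGraph W) {u v : W} (hne : u ≠ v)
    (hna : ¬G.Adj u v) {w : W} (h1 : G.Adj u w) (h2 : G.Adj w v) : G.dist u v = 2 := by
  have hle : G.dist u v ≤ 2 := by
    have := G.dist_le (Walk.cons h1 (Walk.cons h2 Walk.nil))
    simpa using this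
  have hr : G.Reachable u v := ⟨Walk.cons h1 (Walk.cons h2 Walk.nil)⟩
  have h0 : G.dist u v ≠ 0 := by
    intro h; exact hne (hr.dist_eq_zero_iff.mp h)
  have h1' : G.dist u v ≠ 1 := by
    intro h; exact hna (dist_eq_one_iff_adj.mp h)
  omega

lemma exists_mid_of_dist_two {W : Type*} (G : SimpleGraph W) {u v : W}
    (hr : G.Reachable u v) (hd : G.dist u v = 2) : ∃ w, G.Adj u w ∧ G.Adj w v := by
  obtain ⟨p, hp⟩ := hr.exists_walk_length_eq_dist
  rw [hd] at hp
  cases p with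
  | nil => simp at hp
  | cons h q =>
    cases q with
    | nil => simp at hp
    | cons h' q' =>
      simp [Nat.add_eq_zero] at hp
      have := hp.eq
      subst this
      exact ⟨_, h, h'⟩

lemma cograph_dist_le_two {W : Type*} {G : SimpleGraph W} (hc : IsCograph G) {u v : W}
    (hr : G.Reachable u v) : G.dist u v ≤ 2 := by
  by_contra hlt
  push_neg at hlt
  obtain ⟨p, hp⟩ := hr.exists_walk_length_eq_dist
  match p, hp with
  | Walk.nil, hp => rw [← hp] at hlt; simp at hlt
  | Walk.cons h1 Walk.nil, hp => rw [← hp] at hlt; simp at hlt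
  | Walk.cons h1 (Walk.cons h2 Walk.nil), hp => rw [← hp] at hlt; simp at hlt
  | Walk.cons (v := b) h1 (Walk.cons (v := c) h2 (Walk.cons (v := d) h3 q)), hp =>
    simp only [Walk.length_cons] at hp
    have shorter : ∀ (r : G.Walk u v), r.length + 1 ≤ q.length + 3 → False := by
      intro r hr'
      have := G.dist_le r
      omega
    have nac : ¬G.Adj u c := fun a =>
      shorter (Walk.cons a (Walk.cons h3 q)) (by simp)
    have nad : ¬G.Adj u d := fun a => shorter (Walk.cons a q) (by simp)
    have nbd : ¬G.Adj b d := fun a =>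
      shorter (Walk.cons h1 (Walk.cons a q)) (by simp)
    have huc : u ≠ c := by rintro rfl; exact shorter (Walk.cons h3 q) (by simp)
    have hud : u ≠ d := by
      rintro rfl
      have := G.dist_le q
      omega
    have hbd : b ≠ d := by
      rintro rfl; exact shorter (Walk.cons h1 q) (by simp)
    exact hc ⟨u, b, c, d, by
      simp [List.nodup_cons, h1.ne, h2.ne, h3.ne, huc, hud, hbd], h1, h2, h3, nac, nad, nbd⟩

lemma induce_cograph {V : Type*} {G : SimpleGraph V} (hc : IsCograph G) {U : Set (Option V)}
    (hU : none ∉ U) : IsCograph ((extGraph G).induce U) := by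
  rintro ⟨a, b, c, d, hn, h1, h2, h3, n1, n2, n3⟩
  obtain ⟨a', ha'⟩ : ∃ x, a.1 = some x := by
    cases h : a.1 with
    | none => exact absurd (h ▸ a.2) hU
    | some x => exact ⟨x, rfl⟩
  obtain ⟨b', hb'⟩ : ∃ x, b.1 = some x := by
    cases h : b.1 with
    | none => exact absurd (h ▸ b.2) hU
    | some x => exact ⟨x, rfl⟩
  obtain ⟨c', hc'⟩ : ∃ x, c.1 = some x := by
    cases h : c.1 with
    | none => exact absurd (h ▸ c.2) hU
    | some x => exact ⟨x, rfl⟩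
  obtain ⟨d', hd'⟩ : ∃ x, d.1 = some x := by
    cases h : d.1 with
    | none => exact absurd (h ▸ d.2) hU
    | some x => exact ⟨x, rfl⟩
  have adj_iff : ∀ (x y : U) (x' y' : V), x.1 = some x' → y.1 = some y' →
      (((extGraph G).induce U).Adj x y ↔ G.Adj x' y') := by
    intro x y x' y' hx hy
    show (extGraph G).Adj x.1 y.1 ↔ _
    rw [hx, hy]
    exact Iff.rfl
  have ne_of : ∀ (x y : U) (x' y' : V), x.1 = some x' → y.1 = some y' → x ≠ y → x' ≠ y' := by
    intro x y x' y' hx hy hne heq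
    exact hne (Subtype.ext (by rw [hx, hy, heq]))
  have e1 : a ≠ b := by rintro rfl; simp at hn
  have e2 : a ≠ c := by rintro rfl; simp at hn
  have e3 : a ≠ d := by rintro rfl; simp at hn
  have e4 : b ≠ c := by rintro rfl; simp at hn
  have e5 : b ≠ d := by rintro rfl; simp at hn
  have e6 : c ≠ d := by rintro rfl; simp at hn
  exact hc ⟨a', b', c', d', by
    simp [ne_of a b a' b' ha' hb' e1, ne_of a c a' c' ha' hc' e2,
      ne_of a d a' d' ha' hd' e3, ne_of b c b' c' hb' hc' e4,
      ne_of b d b' d' hb' hd' e5, ne_of c d c' d' hc' hd' e6],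
    (adj_iff a b a' b' ha' hb').mp h1, (adj_iff b c b' c' hb' hc').mp h2,
    (adj_iff c d c' d' hc' hd').mp h3,
    fun h => n1 ((adj_iff a c a' c' ha' hc').mpr h),
    fun h => n2 ((adj_iff a d a' d' ha' hd').mpr h),
    fun h => n3 ((adj_iff b d b' d' hb' hd').mpr h)⟩

theorem stmt16 {V : Type*} [Fintype V] (G : SimpleGraph V) :
    DistHereditary (extGraph G) ↔ IsCograph G := by
  constructor
  · -- DH → cograph
    intro hdh
    rintro ⟨a, b, c, d, hn, hab, hbc, hcd, nac, nad, nbd⟩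
    have had' : a ≠ d := by rintro rfl; simp at hn
    set U : Set (Option V) := {some a, some b, some c, some d} with hUdef
    have hA : (some a : Option V) ∈ U := by simp [hUdef]
    have hB : (some b : Option V) ∈ U := by simp [hUdef]
    have hC : (some c : Option V) ∈ U := by simp [hUdef]
    have hD : (some d : Option V) ∈ U := by simp [hUdef]
    set H := (extGraph G).induce U with hH
    set A : U := ⟨some a, hA⟩
    set B : U := ⟨some b, hB⟩
    set C : U := ⟨some c, hC⟩
    set D : U := ⟨some d, hD⟩
    have adjAB : H.Adj A B := hab
    have adjBC : H.Adj B C := hbc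
    have adjCD : H.Adj C D := hcd
    have key : ∀ x : U, H.Reachable x B := by
      rintro ⟨xv, hx⟩
      simp only [hUdef, Set.mem_insert_iff, Set.mem_singleton_iff] at hx
      rcases hx with rfl | rfl | rfl | rfl
      · exact adjAB.reachable
      · exact Reachable.refl _
      · exact adjBC.symm.reachable
      · exact (adjCD.symm.reachable).trans adjBC.symm.reachable
    have hconn : H.Connected := by
      haveI : Nonempty U := ⟨B⟩
      exact ⟨fun x y => (key x).trans (key y).symm⟩
    have hdist := hdh U hconn A D
    have hGdist : (extGraph G).dist (some a) (some d) = 2 := by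
      refine dist_eq_two _ (by simp [had']) (by simpa using nad)
        (extGraph_adj_some_none G a) (extGraph_adj_none_some G d)
    rw [hGdist] at hdist
    obtain ⟨w, hw1, hw2⟩ := exists_mid_of_dist_two H ((key A).trans (key D).symm) hdist
    obtain ⟨wv, hw⟩ := w
    simp only [hUdef, Set.mem_insert_iff, Set.mem_singleton_iff] at hw
    rcases hw with rfl | rfl | rfl | rfl
    · exact G.irrefl hw1
    · exact nbd hw2
    · exact nac hw1
    · exact G.irrefl hw2
  · -- cograph → DH
    intro hc U hconn u v
    set H := (extGraph G).induce U with hH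
    by_cases huv : u = v
    · subst huv
      simp [SimpleGraph.dist_self]
    by_cases hadj : H.Adj u v
    · have hGadj : (extGraph G).Adj u.1 v.1 := hadj
      rw [dist_eq_one_iff_adj.mpr hadj, dist_eq_one_iff_adj.mpr hGadj]
    · have hval : u.1 ≠ v.1 := fun h => huv (Subtype.ext h)
      have hGna : ¬(extGraph G).Adj u.1 v.1 := hadj
      obtain ⟨x, hx⟩ : ∃ x, u.1 = some x := by
        cases h : u.1 with
        | none =>
          exfalso
          cases h' : v.1 with
          | none => exact hval (h.trans h'.symm)
          | some y => exact hGna (by rw [h, h']; exact extGraph_adj_none_some G y)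
        | some x => exact ⟨x, rfl⟩
      obtain ⟨y, hy⟩ : ∃ y, v.1 = some y := by
        cases h : v.1 with
        | none =>
          exact absurd (by rw [hx, h]; exact extGraph_adj_some_none G x) hGna
        | some y => exact ⟨y, rfl⟩
      have hGdist : (extGraph G).dist u.1 v.1 = 2 := by
        rw [hx, hy] at hGna hval ⊢
        exact dist_eq_two _ hval hGna (extGraph_adj_some_none G x) (extGraph_adj_none_some G y)
      rw [hGdist]
      have hr : H.Reachable u v := hconn.preconnected u v
      have h0 : H.dist u v ≠ 0 := fun h => huv (hr.dist_eq_zero_iff.mp h)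
      have h1 : H.dist u v ≠ 1 := fun h => hadj (dist_eq_one_iff_adj.mp h)
      have hle : H.dist u v ≤ 2 := by
        by_cases hnU : none ∈ U
        · have w1 : H.Adj u ⟨none, hnU⟩ := by
            show (extGraph G).Adj u.1 none
            rw [hx]
            exact extGraph_adj_some_none G x
          have w2 : H.Adj ⟨none, hnU⟩ v := by
            show (extGraph G).Adj none v.1
            rw [hy]
            exact extGraph_adj_none_some G y
          have := SimpleGraph.dist_le (Walk.cons w1 (Walk.cons w2 Walk.nil))
          simpa using this
        · exact cograph_dist_le_two (induce_cograph hc hnU) hr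
      omega
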